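/- Let (M,d) be a separable ultrametric space with a distinguished point 0. Then the Lipschitz-free space F(M) has a monotone Schauder basis. -/

import Mathlib

open scoped NNReal ENNReal
open Metric Filter

noncomputable section
set_option maxHeartbeats 2000000

/-- The space `Lip₀(M)` of real-valued Lipschitz functions on `M` vanishing at the
distinguished point `base`, as a submodule of `M → ℝ`. -/
def LipZero (M : Type*) [MetricSpace M] (base : M) : Submodule ℝ (M → ℝ) where
  carrier := {f | MemHolder 1 f ∧ f base = 0}
  add_mem' := fun hf hg => ⟨hf.1.add hg.1, by simp [hf.2, hg.2]⟩
  zero_mem' := ⟨memHolder_zero, rfl⟩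
  smul_mem' := fun c f hf => ⟨hf.1.smul, by simp [hf.2]⟩

/-- The topological dual of a normed space (Mathlib's former `NormedSpace.Dual`). -/
abbrev NormedSpace.Dual (𝕜 : Type*) [NontriviallyNormedField 𝕜] (E : Type*)
    [SeminormedAddCommGroup E] [NormedSpace 𝕜 E] : Type _ :=
  E →L[𝕜] 𝕜

variable {M : Type*} [MetricSpace M] {base : M}

lemma LipZero.memHolder (f : LipZero M base) : MemHolder 1 (f : M → ℝ) := f.2.1

lemma LipZero.base_eq_zero (f : LipZero M base) : (f : M → ℝ) base = 0 := f.2.2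

lemma LipZero.lipschitzWith (f : LipZero M base) :
    LipschitzWith (nnHolderNorm 1 (f : M → ℝ)) (f : M → ℝ) :=
  holderWith_one.mp f.2.1.holderWith

/-- The norm on `Lip₀(M)`: the optimal Lipschitz constant. -/
noncomputable instance LipZero.normedAddCommGroup : NormedAddCommGroup (LipZero M base) :=
  AddGroupNorm.toNormedAddCommGroup
    { toFun := fun f => nnHolderNorm 1 (f : M → ℝ)
      map_zero' := by simp
      add_le' := fun f g => by
        have := (LipZero.memHolder f).nnHolderNorm_add_le (LipZero.memHolder g)
        exact_mod_cast this
      neg' := fun f => by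
        show (nnHolderNorm 1 ((-f : LipZero M base) : M → ℝ) : ℝ) = _
        have h : ((-f : LipZero M base) : M → ℝ) = (-1 : ℝ) • (f : M → ℝ) := by
          simp
        rw [h, (LipZero.memHolder f).nnHolderNorm_smul ((-1 : ℝ))]
        simp
      eq_zero_of_map_eq_zero' := fun f hf => by
        have hf' : (nnHolderNorm 1 (f : M → ℝ) : ℝ) = 0 := hf
        have h0 : nnHolderNorm 1 (f : M → ℝ) = 0 := by exact_mod_cast hf'
        have hconst := ((LipZero.memHolder f).nnHolderNorm_eq_zero).mp h0
        have : ∀ x, (f : M → ℝ) x = 0 := fun x =>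
          (hconst x base).trans (LipZero.base_eq_zero f)
        exact Subtype.ext (funext this) }

lemma LipZero.norm_def (f : LipZero M base) :
    ‖f‖ = (nnHolderNorm 1 (f : M → ℝ) : ℝ) := rfl

noncomputable instance LipZero.normedSpace : NormedSpace ℝ (LipZero M base) where
  norm_smul_le c f := by
    have : ((c • f : LipZero M base) : M → ℝ) = c • (f : M → ℝ) := rfl
    rw [LipZero.norm_def, LipZero.norm_def, this, (LipZero.memHolder f).nnHolderNorm_smul c]
    push_cast
    simp [norm_smul]

lemma LipZero.dist_le (f : LipZero M base) (x y : M) :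
    dist ((f : M → ℝ) x) ((f : M → ℝ) y) ≤ ‖f‖ * dist x y :=
  (LipZero.lipschitzWith f).dist_le_mul x y

variable (M base) in
/-- The Dirac map `δ : M → Lip₀(M)*`. -/
noncomputable def freeDelta (x : M) : NormedSpace.Dual ℝ (LipZero M base) :=
  LinearMap.mkContinuous
    { toFun := fun f => (f : M → ℝ) x
      map_add' := fun f g => rfl
      map_smul' := fun c f => rfl }
    (dist x base)
    (fun f => by
      have h := LipZero.dist_le f x base
      rw [LipZero.base_eq_zero f, dist_zero_right] at h
      simpa [mul_comm] using h)

variable (M base) in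
/-- The Lipschitz-free space `F(M)`: the closed linear span of the Dirac measures
inside `Lip₀(M)*`. -/
noncomputable def FreeSpace : Submodule ℝ (NormedSpace.Dual ℝ (LipZero M base)) :=
  (Submodule.span ℝ (Set.range (freeDelta M base))).topologicalClosure

variable (M base) in
/-- The Dirac map, viewed as a map into the free space `F(M)`. -/
noncomputable def freeDeltaF (x : M) : FreeSpace M base :=
  ⟨freeDelta M base x,
    Submodule.le_topologicalClosure _ (Submodule.subset_span ⟨x, rfl⟩)⟩

instance : CompleteSpace (FreeSpace M base) :=
  IsClosed.completeSpace_coe (hs := Submodule.isClosed_topologicalClosure _)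


/-- `c` represents `x` in terms of the sequence `e`: the partial sums `∑_{i<n} cᵢ eᵢ`
converge to `x`. -/
def IsSchauderRep {X : Type*} [NormedAddCommGroup X] [NormedSpace ℝ X]
    (e : ℕ → X) (x : X) (c : ℕ → ℝ) : Prop :=
  Filter.Tendsto (fun n => ∑ i ∈ Finset.range n, c i • e i) Filter.atTop (nhds x)

/-- `X` has a monotone Schauder basis: a (finite or infinite) sequence `e` such that every
`x ∈ X` is uniquely represented as `x = ∑ᵢ cᵢ eᵢ`, and all the canonical projections
(partial-sum operators) have norm at most `1`. -/
def HasMonotoneSchauderBasis (X : Type*) [NormedAddCommGroup X] [NormedSpace ℝ X] : Prop :=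
  (∃ (d : ℕ) (e : Fin d → X),
      (∀ x : X, ∃! c : Fin d → ℝ, x = ∑ i, c i • e i) ∧
      (∀ (x : X) (c : Fin d → ℝ), x = ∑ i, c i • e i →
        ∀ n : ℕ, ‖∑ i ∈ Finset.univ.filter (fun i : Fin d => (i : ℕ) < n), c i • e i‖ ≤ ‖x‖)) ∨
  (∃ e : ℕ → X,
      (∀ x : X, ∃! c : ℕ → ℝ, IsSchauderRep e x c) ∧
      (∀ (x : X) (c : ℕ → ℝ), IsSchauderRep e x c →
        ∀ n : ℕ, ‖∑ i ∈ Finset.range n, c i • e i‖ ≤ ‖x‖))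

section Ultra
variable {M : Type*} [MetricSpace M] {base : M}

noncomputable instance (priority := 2000) LipZero.instUniformSpace :
    UniformSpace (LipZero M base) := PseudoMetricSpace.toUniformSpace

noncomputable instance (priority := 2000) LipZero.instTopologicalSpace :
    TopologicalSpace (LipZero M base) := UniformSpace.toTopologicalSpace

lemma freeDelta_apply (x : M) (f : LipZero M base) :
    freeDelta M base x f = (f : M → ℝ) x := rfl

lemma dual_sub_apply (A B : NormedSpace.Dual ℝ (LipZero M base)) (f : LipZero M base) :
    (A - B) f = A f - B f := rfl

lemma dual_smul_apply (c : ℝ) (A : NormedSpace.Dual ℝ (LipZero M base)) (f : LipZero M base) :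
    (c • A) f = c • (A f) := rfl

lemma dual_sum_apply {ι : Type*} (s : Finset ι) (F : ι → NormedSpace.Dual ℝ (LipZero M base))
    (f : LipZero M base) : (∑ i ∈ s, F i) f = ∑ i ∈ s, F i f := by
  classical
  induction s using Finset.induction with
  | empty => rfl
  | insert _ _ h ih =>
    rw [Finset.sum_insert h, Finset.sum_insert h, ← ih]
    rfl

lemma freeDelta_base : freeDelta M base base = 0 := by
  refine ContinuousLinearMap.ext fun f => ?_
  exact LipZero.base_eq_zero f

lemma norm_freeDelta_sub_le (x y : M) :
    ‖freeDelta M base x - freeDelta M base y‖ ≤ dist x y := by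
  refine ContinuousLinearMap.opNorm_le_bound _ dist_nonneg fun f => ?_
  rw [dual_sub_apply, freeDelta_apply, freeDelta_apply]
  have h := LipZero.dist_le f x y
  rw [Real.dist_eq] at h
  calc ‖(f : M → ℝ) x - (f : M → ℝ) y‖ ≤ ‖f‖ * dist x y := h
    _ = dist x y * ‖f‖ := mul_comm _ _

lemma freeDelta_ne (x y : M) (h : x ≠ y) :
    freeDelta M base x ≠ freeDelta M base y := by
  intro heq
  set g : M → ℝ := fun w => dist w y - dist base y with hg
  have hlip : LipschitzWith 1 g := by
    rw [lipschitzWith_iff_dist_le_mul]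
    intro a b
    rw [hg]
    simp only [Real.dist_eq, NNReal.coe_one, one_mul]
    have h1 : dist a y - dist base y - (dist b y - dist base y) = dist a y - dist b y := by ring
    rw [h1]
    exact abs_dist_sub_le a b y
  have hgb : g base = 0 := by simp [hg]
  set G : LipZero M base := ⟨g, ⟨⟨1, holderWith_one.mpr hlip⟩, hgb⟩⟩ with hG
  have h1 : freeDelta M base x G = freeDelta M base y G := by rw [heq]
  rw [freeDelta_apply, freeDelta_apply] at h1
  have h2 : (G : M → ℝ) x = dist x y - dist base y := rfl
  have h3 : (G : M → ℝ) y = dist y y - dist base y := rfl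
  rw [h2, h3, dist_self] at h1
  have : dist x y = 0 := by linarith
  exact h (by rwa [dist_eq_zero] at this)

/-- Index of (one of) the closest point(s) among the previous ones. -/
noncomputable def nxt (x : ℕ → M) (k : ℕ) : ℕ :=
  if h : 0 < k then
    Classical.choose ((Finset.range k).exists_min_image
      (fun j => dist (x k) (x j)) ⟨0, Finset.mem_range.mpr h⟩)
  else 0

lemma nxt_lt (x : ℕ → M) {k : ℕ} (h : 0 < k) : nxt x k < k := by
  rw [nxt, dif_pos h]
  exact Finset.mem_range.mp (Classical.choose_spec ((Finset.range k).exists_min_image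
    (fun j => dist (x k) (x j)) ⟨0, Finset.mem_range.mpr h⟩)).1

lemma nxt_min (x : ℕ → M) {k j : ℕ} (hj : j < k) :
    dist (x k) (x (nxt x k)) ≤ dist (x k) (x j) := by
  have h : 0 < k := lt_of_le_of_lt (Nat.zero_le j) hj
  rw [nxt, dif_pos h]
  exact (Classical.choose_spec ((Finset.range k).exists_min_image
    (fun j => dist (x k) (x j)) ⟨0, Finset.mem_range.mpr h⟩)).2 j (Finset.mem_range.mpr hj)

lemma nxt_step (hU : ∀ a b c : M, dist a c ≤ max (dist a b) (dist b c))
    (x : ℕ → M) {k j : ℕ} (hj : j < k) :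
    dist (x (nxt x k)) (x j) ≤ dist (x k) (x j) := by
  refine le_trans (hU (x (nxt x k)) (x k) (x j)) (max_le ?_ le_rfl)
  rw [dist_comm]
  exact nxt_min x hj

/-- Iterated retraction onto the first `N+1` points. -/
noncomputable def retr (x : ℕ → M) (N : ℕ) (k : ℕ) : ℕ :=
  if h : k ≤ N then k else retr x N (nxt x k)
termination_by k
decreasing_by exact nxt_lt x (by omega)

lemma retr_of_le {x : ℕ → M} {N k : ℕ} (h : k ≤ N) : retr x N k = k := by
  rw [retr, dif_pos h]

lemma retr_of_gt {x : ℕ → M} {N k : ℕ} (h : N < k) :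
    retr x N k = retr x N (nxt x k) := by
  rw [retr, dif_neg (Nat.not_le.mpr h)]

lemma retr_le_max (x : ℕ → M) (N : ℕ) : ∀ k, retr x N k ≤ max N k := by
  intro k
  induction k using Nat.strong_induction_on with
  | _ k ih =>
    by_cases h : k ≤ N
    · rw [retr_of_le h]
      exact le_max_right _ _
    · rw [retr_of_gt (Nat.not_le.mp h)]
      have hnk : nxt x k < k := nxt_lt x (by omega)
      exact le_trans (ih (nxt x k) hnk) (max_le_max le_rfl (le_of_lt hnk))

lemma retr_zero (x : ℕ → M) (N : ℕ) : retr x N 0 = 0 := retr_of_le (Nat.zero_le N)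

lemma retr_contract_aux (hU : ∀ a b c : M, dist a c ≤ max (dist a b) (dist b c))
    (x : ℕ → M) (N : ℕ) : ∀ k j, j < k →
    dist (x (retr x N k)) (x (retr x N j)) ≤ dist (x k) (x j) := by
  intro k
  induction k using Nat.strong_induction_on with
  | _ k ih =>
    intro j hj
    by_cases h : k ≤ N
    · rw [retr_of_le h, retr_of_le (le_trans (le_of_lt hj) h)]
    · rw [retr_of_gt (Nat.not_le.mp h)]
      have hnk : nxt x k < k := nxt_lt x (by omega)
      have step : dist (x (nxt x k)) (x j) ≤ dist (x k) (x j) := nxt_step hU x hj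
      have main : dist (x (retr x N (nxt x k))) (x (retr x N j)) ≤ dist (x (nxt x k)) (x j) := by
        rcases lt_trichotomy j (nxt x k) with hc | hc | hc
        · exact ih (nxt x k) hnk j hc
        · rw [← hc, dist_self]
          exact dist_nonneg
        · rw [dist_comm (x (retr x N (nxt x k))), dist_comm (x (nxt x k))]
          exact ih j hj (nxt x k) hc
      exact le_trans main step

lemma retr_contract (hU : ∀ a b c : M, dist a c ≤ max (dist a b) (dist b c))
    (x : ℕ → M) (N : ℕ) (k j : ℕ) :
    dist (x (retr x N k)) (x (retr x N j)) ≤ dist (x k) (x j) := by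
  rcases lt_trichotomy j k with hc | hc | hc
  · exact retr_contract_aux hU x N k j hc
  · rw [hc, dist_self]
    exact dist_nonneg
  · rw [dist_comm (x (retr x N k)), dist_comm (x k)]
    exact retr_contract_aux hU x N j k hc

/-- The key (McShane-extension) inequality: a pointwise distance-contracting, basepoint
preserving reindexing does not increase the norm of combinations of Dirac differences. -/
lemma key_ineq (x : ℕ → M) (hx0 : x 0 = base) (K : ℕ) (hinj : Set.InjOn x (Set.Iic K))
    (φ : ℕ → ℕ) (hφ0 : φ 0 = 0)
    (hφ : ∀ k j, dist (x (φ k)) (x (φ j)) ≤ dist (x k) (x j))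
    (u v : ℕ → ℕ) (m : ℕ) (hu : ∀ i, i < m → u i ≤ K) (hv : ∀ i, i < m → v i ≤ K)
    (c : ℕ → ℝ) :
    ‖∑ i ∈ Finset.range m,
        c i • (freeDelta M base (x (φ (u i))) - freeDelta M base (x (φ (v i))))‖
      ≤ ‖∑ i ∈ Finset.range m,
        c i • (freeDelta M base (x (u i)) - freeDelta M base (x (v i)))‖ := by
  classical
  set T := ∑ i ∈ Finset.range m,
    c i • (freeDelta M base (x (u i)) - freeDelta M base (x (v i))) with hT
  refine ContinuousLinearMap.opNorm_le_bound _ (norm_nonneg T) fun f => ?_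
  set S : Set M := x '' (Set.Iic K) with hS
  set C : ℝ≥0 := nnHolderNorm 1 (f : M → ℝ) with hC
  set h : M → ℝ := fun w =>
    if hy : ∃ k, k ≤ K ∧ x k = w then (f : M → ℝ) (x (φ (Classical.choose hy))) else 0 with hh
  have hval : ∀ k, k ≤ K → h (x k) = (f : M → ℝ) (x (φ k)) := by
    intro k hk
    have hy : ∃ k', k' ≤ K ∧ x k' = x k := ⟨k, hk, rfl⟩
    have hspec := Classical.choose_spec hy
    have hck : Classical.choose hy = k := hinj hspec.1 hk hspec.2
    simp only [hh]
    rw [dif_pos hy, hck]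
  have hlipOn : LipschitzOnWith C h S := by
    rw [lipschitzOnWith_iff_dist_le_mul]
    rintro s ⟨k, hk, rfl⟩ t ⟨j, hj, rfl⟩
    rw [hval k hk, hval j hj]
    calc dist ((f : M → ℝ) (x (φ k))) ((f : M → ℝ) (x (φ j)))
        ≤ ‖f‖ * dist (x (φ k)) (x (φ j)) := LipZero.dist_le f _ _
      _ ≤ ‖f‖ * dist (x k) (x j) :=
          mul_le_mul_of_nonneg_left (hφ k j) (norm_nonneg f)
      _ = ↑C * dist (x k) (x j) := by rw [LipZero.norm_def]
  obtain ⟨g, hg, heqOn⟩ := hlipOn.extend_real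
  have hbase_mem : base ∈ S := ⟨0, Set.mem_Iic.mpr (Nat.zero_le K), hx0⟩
  have hgx : ∀ k, k ≤ K → g (x k) = (f : M → ℝ) (x (φ k)) := fun k hk => by
    rw [← heqOn ⟨k, Set.mem_Iic.mpr hk, rfl⟩, hval k hk]
  have hgbase : g base = 0 := by
    have h0 : g (x 0) = (f : M → ℝ) (x (φ 0)) := hgx 0 (Nat.zero_le K)
    calc g base = g (x 0) := by rw [hx0]
      _ = (f : M → ℝ) (x (φ 0)) := h0
      _ = (f : M → ℝ) (x 0) := by rw [hφ0]
      _ = 0 := by rw [hx0]; exact LipZero.base_eq_zero f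
  set G : LipZero M base := ⟨g, ⟨⟨C, holderWith_one.mpr hg⟩, hgbase⟩⟩ with hG
  have hGnorm : ‖G‖ ≤ ‖f‖ := by
    rw [LipZero.norm_def, LipZero.norm_def]
    have h2 : nnHolderNorm 1 (G : M → ℝ) ≤ C := (holderWith_one.mpr hg).nnholderNorm_le
    exact NNReal.coe_le_coe.mpr h2
  have heval : T G = ∑ i ∈ Finset.range m,
      c i • ((f : M → ℝ) (x (φ (u i))) - (f : M → ℝ) (x (φ (v i)))) := by
    rw [hT, dual_sum_apply]
    refine Finset.sum_congr rfl fun i hi => ?_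
    rw [dual_smul_apply, dual_sub_apply, freeDelta_apply, freeDelta_apply]
    have hui := hgx (u i) (hu i (Finset.mem_range.mp hi))
    have hvi := hgx (v i) (hv i (Finset.mem_range.mp hi))
    show c i • (g (x (u i)) - g (x (v i))) = _
    rw [hui, hvi]
  have hLHS : (∑ i ∈ Finset.range m,
      c i • (freeDelta M base (x (φ (u i))) - freeDelta M base (x (φ (v i))))) f = T G := by
    rw [heval, dual_sum_apply]
    refine Finset.sum_congr rfl fun i hi => ?_
    rw [dual_smul_apply, dual_sub_apply, freeDelta_apply, freeDelta_apply]
  rw [hLHS]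
  calc ‖T G‖ ≤ ‖T‖ * ‖G‖ := T.le_opNorm G
    _ ≤ ‖T‖ * ‖f‖ := mul_le_mul_of_nonneg_left hGnorm (norm_nonneg T)

end Ultra

section Gruenblum
variable {X : Type*} [NormedAddCommGroup X] [NormedSpace ℝ X]

lemma partial_sums_eq_zero {e : ℕ → X} {c : ℕ → ℝ} {m : ℕ}
    (hmono : ∀ n, n ≤ m →
      ‖∑ i ∈ Finset.range n, c i • e i‖ ≤ ‖∑ i ∈ Finset.range m, c i • e i‖)
    (h : ∑ i ∈ Finset.range m, c i • e i = 0) :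
    ∀ n ≤ m, ∑ i ∈ Finset.range n, c i • e i = 0 := fun n hn =>
  norm_le_zero_iff.mp (by simpa [h] using hmono n hn)

lemma coeff_eq_zero_of_sum_eq_zero {e : ℕ → X} {c : ℕ → ℝ} {m : ℕ}
    (he : ∀ n, n < m → e n ≠ 0)
    (hmono : ∀ n, n ≤ m →
      ‖∑ i ∈ Finset.range n, c i • e i‖ ≤ ‖∑ i ∈ Finset.range m, c i • e i‖)
    (h : ∑ i ∈ Finset.range m, c i • e i = 0) :
    ∀ n < m, c n = 0 := by
  intro n hn
  have h1 := partial_sums_eq_zero hmono h (n + 1) hn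
  have h2 := partial_sums_eq_zero hmono h n hn.le
  rw [Finset.sum_range_succ, h2, zero_add] at h1
  rcases smul_eq_zero.mp h1 with h | h
  · exact h
  · exact absurd h (he n hn)

lemma li_of_mono {e : ℕ → X} (he : ∀ n, e n ≠ 0)
    (hmono : ∀ (c : ℕ → ℝ) (n m : ℕ), n ≤ m →
      ‖∑ i ∈ Finset.range n, c i • e i‖ ≤ ‖∑ i ∈ Finset.range m, c i • e i‖) :
    LinearIndependent ℝ e := by
  rw [linearIndependent_iff']
  intro s g hg i hi
  set m := s.sup id + 1 with hm
  have hsub : s ⊆ Finset.range m := by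
    intro j hj
    exact Finset.mem_range.mpr (Nat.lt_succ_of_le (Finset.le_sup (f := id) hj))
  set g' : ℕ → ℝ := fun j => if j ∈ s then g j else 0 with hg'
  have hsum : ∑ j ∈ Finset.range m, g' j • e j = 0 := by
    rw [← hg]
    rw [← Finset.sum_subset hsub (fun j _ hj => by simp [hg', hj])]
    exact Finset.sum_congr rfl fun j hj => by simp [hg', hj]
  have := coeff_eq_zero_of_sum_eq_zero (fun n _ => he n) (fun a ha => hmono g' a m ha)
    hsum i (Finset.mem_range.mp (hsub hi))
  simpa [hg', hi] using this

variable [CompleteSpace X]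

lemma gruenblum (e : ℕ → X) (he : ∀ n, e n ≠ 0)
    (hd : Dense ((Submodule.span ℝ (Set.range e) : Submodule ℝ X) : Set X))
    (hmono : ∀ (c : ℕ → ℝ) (n m : ℕ), n ≤ m →
      ‖∑ i ∈ Finset.range n, c i • e i‖ ≤ ‖∑ i ∈ Finset.range m, c i • e i‖) :
    (∀ x : X, ∃! c : ℕ → ℝ, IsSchauderRep e x c) ∧
      (∀ (x : X) (c : ℕ → ℝ), IsSchauderRep e x c →
        ∀ n : ℕ, ‖∑ i ∈ Finset.range n, c i • e i‖ ≤ ‖x‖) := by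
  classical
  set sp := Submodule.span ℝ (Set.range e) with hsp
  have li : LinearIndependent ℝ e := li_of_mono he hmono
  set b : Module.Basis ℕ ℝ sp := Module.Basis.span li with hb
  -- representation of elements of sp as range-sums
  have hrep : ∀ (y : sp) (m : ℕ), (b.repr y).support ⊆ Finset.range m →
      (y : X) = ∑ i ∈ Finset.range m, b.repr y i • e i := by
    intro y m hsupp
    have h1 := b.linearCombination_repr y
    rw [Finsupp.linearCombination_apply, Finsupp.sum] at h1
    have h2 : ((∑ i ∈ (b.repr y).support, b.repr y i • b i : sp) : X)
        = ∑ i ∈ (b.repr y).support, b.repr y i • e i := by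
      rw [Submodule.coe_sum]
      exact Finset.sum_congr rfl fun i _ => by
        rw [SetLike.val_smul, Module.Basis.span_apply]
    have h3 : (y : X) = ∑ i ∈ (b.repr y).support, b.repr y i • e i := by
      rw [← h2, h1]
    rw [h3]
    exact Finset.sum_subset hsupp fun i _ hi => by
      rw [Finsupp.notMem_support_iff.mp hi, zero_smul]
  -- the truncation operators on sp
  set w : ℕ → ℕ → X := fun n i => if i < n then e i else 0 with hw
  set Pl : ℕ → (sp →ₗ[ℝ] X) := fun n => b.constr ℝ (w n) with hPl
  have hPl_apply : ∀ (n : ℕ) (y : sp),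
      Pl n y = ∑ i ∈ Finset.range n, b.repr y i • e i := by
    intro n y
    rw [hPl, Module.Basis.constr_apply, Finsupp.sum]
    have h1 : ∑ i ∈ (b.repr y).support, b.repr y i • w n i
        = ∑ i ∈ (b.repr y).support.filter (fun i => i < n), b.repr y i • e i := by
      rw [Finset.sum_filter]
      exact Finset.sum_congr rfl fun i _ => by
        by_cases h : i < n <;> simp [hw, h]
    rw [h1]
    refine Finset.sum_subset ?_ ?_
    · intro i hi
      exact Finset.mem_range.mpr (Finset.mem_filter.mp hi).2
    · intro i hi hni
      by_cases hs : i ∈ (b.repr y).support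
      · simp only [Finset.mem_filter, not_and, not_lt] at hni
        exact absurd (Finset.mem_range.mp hi) (not_lt.mpr (hni hs))
      · rw [Finsupp.notMem_support_iff.mp hs, zero_smul]
  have hPl_bound : ∀ (n : ℕ) (y : sp), ‖Pl n y‖ ≤ 1 * ‖y‖ := by
    intro n y
    set m := max n ((b.repr y).support.sup id + 1) with hm
    have hsupp : (b.repr y).support ⊆ Finset.range m := by
      intro j hj
      exact Finset.mem_range.mpr (lt_of_lt_of_le
        (Nat.lt_succ_of_le (Finset.le_sup (f := id) hj)) (le_max_right _ _))
    rw [one_mul, hPl_apply]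
    calc ‖∑ i ∈ Finset.range n, b.repr y i • e i‖
        ≤ ‖∑ i ∈ Finset.range m, b.repr y i • e i‖ :=
          hmono _ n m (le_max_left _ _)
      _ = ‖(y : X)‖ := by rw [← hrep y m hsupp]
      _ = ‖y‖ := rfl
  set Plc : ℕ → (sp →L[ℝ] X) := fun n => (Pl n).mkContinuous 1 (hPl_bound n) with hPlc
  have hsubdense : DenseRange (sp.subtypeL (R := ℝ)) := by
    have : Set.range (sp.subtypeL (R := ℝ)) = (sp : Set X) := Subtype.range_coe
    rw [DenseRange, this]; exact hd
  have hui : IsUniformInducing (sp.subtypeL (R := ℝ)) :=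
    isometry_subtype_coe.isUniformInducing
  have hbnd : ∀ y : sp, ‖y‖ ≤ ((1 : ℝ≥0) : ℝ) * ‖sp.subtypeL y‖ := fun y => by
    rw [NNReal.coe_one, one_mul]; exact le_of_eq rfl
  set P : ℕ → (X →L[ℝ] X) := fun n => (Plc n).extend sp.subtypeL with hP
  have hP_norm : ∀ n, ‖P n‖ ≤ 1 := by
    intro n
    have h1 : ‖P n‖ ≤ (1 : ℝ≥0) * ‖Plc n‖ :=
      ContinuousLinearMap.opNorm_extend_le (Plc n) hsubdense hbnd
    have h2 : ‖Plc n‖ ≤ 1 := LinearMap.mkContinuous_norm_le _ zero_le_one _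
    simpa using h1.trans (by simpa using h2)
  have hP_coe : ∀ (n : ℕ) (y : sp), P n (y : X) = Pl n y := fun n y =>
    ContinuousLinearMap.extend_eq _ hsubdense hui _
  -- closure argument helper
  have hclosure : ∀ (T : X →L[ℝ] X) (U : Set X), IsClosed U →
      (∀ y : sp, T (y : X) ∈ U) → ∀ x : X, T x ∈ U := by
    intro T U hU hy x
    have h1 : (sp : Set X) ⊆ T ⁻¹' U := fun z hz => hy ⟨z, hz⟩
    have h2 : closure (sp : Set X) ⊆ T ⁻¹' U :=
      closure_minimal h1 (hU.preimage T.continuous)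
    exact h2 (by rw [hd.closure_eq]; trivial)
  -- action on basis vectors and finite sums
  have hP_e : ∀ n i, P n (e i) = w n i := by
    intro n i
    calc P n (e i) = P n ((b i : sp) : X) := by rw [hb, Module.Basis.span_apply]
      _ = Pl n (b i) := hP_coe n (b i)
      _ = w n i := by rw [hPl, Module.Basis.constr_basis]
  have hP_sum : ∀ (n m : ℕ) (c : ℕ → ℝ),
      P n (∑ i ∈ Finset.range m, c i • e i) = ∑ i ∈ Finset.range (min n m), c i • e i := by
    intro n m c
    rw [map_sum]
    calc ∑ i ∈ Finset.range m, P n (c i • e i)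
        = ∑ i ∈ Finset.range m, (if i < n then c i • e i else 0) := by
          refine Finset.sum_congr rfl fun i _ => ?_
          rw [(P n).map_smul, hP_e]
          by_cases h : i < n <;> simp [hw, h]
      _ = ∑ i ∈ (Finset.range m).filter (fun i => i < n), c i • e i :=
          (Finset.sum_filter _ _).symm
      _ = ∑ i ∈ Finset.range (min n m), c i • e i := by
          congr 1
          ext j
          simp [Nat.lt_min, and_comm]
  -- convergence of projections
  have hP_tendsto : ∀ x : X, Tendsto (fun n => P n x) atTop (nhds x) := by
    intro x
    rw [Metric.tendsto_atTop]
    intro ε hε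
    have hx : x ∈ closure (sp : Set X) := by rw [hd.closure_eq]; trivial
    obtain ⟨z, hz, hdistxz⟩ := Metric.mem_closure_iff.mp hx (ε/3) (by linarith)
    set y : sp := ⟨z, hz⟩ with hy
    set m := (b.repr y).support.sup id + 1 with hm
    have hsupp : (b.repr y).support ⊆ Finset.range m := fun j hj =>
      Finset.mem_range.mpr (Nat.lt_succ_of_le (Finset.le_sup (f := id) hj))
    have hzrep : z = ∑ i ∈ Finset.range m, b.repr y i • e i := hrep y m hsupp
    refine ⟨m, fun n hn => ?_⟩
    have hPz : P n z = z := by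
      rw [hzrep, hP_sum, min_eq_right hn]
    have h1 : dist (P n x) x ≤ dist (P n x) (P n z) + dist (P n z) x := dist_triangle _ _ _
    have h2 : dist (P n x) (P n z) ≤ dist x z := by
      rw [dist_eq_norm, ← map_sub]
      calc ‖P n (x - z)‖ ≤ ‖P n‖ * ‖x - z‖ := (P n).le_opNorm _
        _ ≤ 1 * ‖x - z‖ := mul_le_mul_of_nonneg_right (hP_norm n) (norm_nonneg _)
        _ = dist x z := by rw [one_mul, dist_eq_norm]
    rw [hPz] at h1 h2
    rw [dist_comm z x] at h1
    linarith
  -- difference operators land in span of a single vector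
  have hDmem : ∀ (n : ℕ) (x : X), P (n+1) x - P n x ∈ Submodule.span ℝ {e n} := by
    intro n x
    have hclosedU : IsClosed ((Submodule.span ℝ {e n} : Submodule ℝ X) : Set X) :=
      Submodule.closed_of_finiteDimensional _
    refine hclosure (P (n+1) - P n) _ hclosedU (fun y => ?_) x
    rw [ContinuousLinearMap.sub_apply, hP_coe, hP_coe, hPl_apply, hPl_apply,
      Finset.sum_range_succ]
    simp only [add_sub_cancel_left]
    exact Submodule.mem_span_singleton.mpr ⟨b.repr y n, rfl⟩
  have hP0 : ∀ x : X, P 0 x = 0 := by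
    intro x
    have h1 := hclosure (P 0) {0} isClosed_singleton (fun y => by
      rw [hP_coe, hPl_apply]
      simp) x
    simpa using h1
  set coeff : X → ℕ → ℝ := fun x n =>
    Classical.choose (Submodule.mem_span_singleton.mp (hDmem n x)) with hcoeffdef
  have hcoeff_spec : ∀ x n, coeff x n • e n = P (n+1) x - P n x := fun x n =>
    Classical.choose_spec (Submodule.mem_span_singleton.mp (hDmem n x))
  have hcoeff_sum : ∀ x n, ∑ i ∈ Finset.range n, coeff x i • e i = P n x := by
    intro x n
    calc ∑ i ∈ Finset.range n, coeff x i • e i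
        = ∑ i ∈ Finset.range n, (P (i+1) x - P i x) :=
          Finset.sum_congr rfl fun i _ => hcoeff_spec x i
      _ = P n x - P 0 x := Finset.sum_range_sub (fun i => P i x) n
      _ = P n x := by rw [hP0, sub_zero]
  have hrep_P : ∀ (x : X) (c : ℕ → ℝ), IsSchauderRep e x c →
      ∀ m, ∑ i ∈ Finset.range m, c i • e i = P m x := by
    intro x c hc m
    have h1 : Tendsto (fun n => P m (∑ i ∈ Finset.range n, c i • e i)) atTop (nhds (P m x)) :=
      ((P m).continuous.tendsto x).comp hc
    have h3 : Tendsto (fun n => P m (∑ i ∈ Finset.range n, c i • e i)) atTop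
        (nhds (∑ i ∈ Finset.range m, c i • e i)) := by
      apply Tendsto.congr' _ tendsto_const_nhds
      filter_upwards [eventually_ge_atTop m] with n hn
      rw [hP_sum, min_eq_left hn]
    exact tendsto_nhds_unique h3 h1
  refine ⟨fun x => ⟨coeff x, ?_, ?_⟩, fun x c hc n => ?_⟩
  · show Tendsto _ _ _
    have heq : (fun n => ∑ i ∈ Finset.range n, coeff x i • e i) = fun n => P n x :=
      funext fun n => hcoeff_sum x n
    rw [heq]
    exact hP_tendsto x
  · intro c hc
    funext n
    have h1 : ∑ i ∈ Finset.range n, c i • e i = P n x := hrep_P x c hc n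
    have h2 : ∑ i ∈ Finset.range (n+1), c i • e i = P (n+1) x := hrep_P x c hc (n+1)
    have h3 : c n • e n = P (n+1) x - P n x := by
      rw [← h1, ← h2, Finset.sum_range_succ]
      abel
    have h4 : (c n - coeff x n) • e n = 0 := by
      rw [sub_smul, h3, hcoeff_spec]
      abel
    have h5 := (smul_eq_zero.mp h4).resolve_right (he n)
    linarith [sub_eq_zero.mp (by exact_mod_cast h5)]
  · rw [hrep_P x c hc n]
    calc ‖P n x‖ ≤ ‖P n‖ * ‖x‖ := (P n).le_opNorm x
      _ ≤ 1 * ‖x‖ := mul_le_mul_of_nonneg_right (hP_norm n) (norm_nonneg _)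
      _ = ‖x‖ := one_mul _

end Gruenblum


section Assembly
variable {M : Type*} [MetricSpace M] {base : M}

variable (M base) in
/-- The candidate basis vectors. -/
noncomputable def eseq (x : ℕ → M) (n : ℕ) : FreeSpace M base :=
  freeDeltaF M base (x (n + 1)) - freeDeltaF M base (x (nxt x (n + 1)))

lemma eseq_coe (x : ℕ → M) (n : ℕ) :
    ((eseq M base x n : FreeSpace M base) : NormedSpace.Dual ℝ (LipZero M base)) =
      freeDelta M base (x (n + 1)) - freeDelta M base (x (nxt x (n + 1))) := rfl

lemma freespace_norm_coe (w : FreeSpace M base) :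
    ‖w‖ = ‖(w : NormedSpace.Dual ℝ (LipZero M base))‖ := rfl

lemma eseq_sum_coe (x : ℕ → M) (c : ℕ → ℝ) (n : ℕ) :
    ((∑ i ∈ Finset.range n, c i • eseq M base x i : FreeSpace M base) :
        NormedSpace.Dual ℝ (LipZero M base)) =
      ∑ i ∈ Finset.range n,
        c i • (freeDelta M base (x (i + 1)) - freeDelta M base (x (nxt x (i + 1)))) := by
  rw [Submodule.coe_sum]
  exact Finset.sum_congr rfl fun i _ => by rw [SetLike.val_smul, eseq_coe]

lemma eseq_mono (hU : ∀ a b c : M, dist a c ≤ max (dist a b) (dist b c))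
    (x : ℕ → M) (hx0 : x 0 = base) (K : ℕ) (hinj : Set.InjOn x (Set.Iic K))
    (c : ℕ → ℝ) (n m : ℕ) (hnm : n ≤ m) (hmK : m ≤ K) :
    ‖∑ i ∈ Finset.range n, c i • eseq M base x i‖ ≤
      ‖∑ i ∈ Finset.range m, c i • eseq M base x i‖ := by
  have hkey := key_ineq x hx0 K hinj (retr x n) (retr_zero x n) (retr_contract hU x n)
    (fun i => i + 1) (fun i => nxt x (i + 1)) m
    (fun i hi => by show i + 1 ≤ K; omega)
    (fun i hi => by
      show nxt x (i + 1) ≤ K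
      have := nxt_lt x (show 0 < i + 1 by omega)
      omega) c
  set A : ℕ → NormedSpace.Dual ℝ (LipZero M base) := fun i =>
    c i • (freeDelta M base (x (retr x n (i + 1))) -
      freeDelta M base (x (retr x n (nxt x (i + 1))))) with hA
  set B : ℕ → NormedSpace.Dual ℝ (LipZero M base) := fun i =>
    c i • (freeDelta M base (x (i + 1)) - freeDelta M base (x (nxt x (i + 1)))) with hB
  have h1 : ∀ i ∈ Finset.range n, A i = B i := by
    intro i hi
    have hin : i + 1 ≤ n := Finset.mem_range.mp hi
    have h2 : nxt x (i + 1) ≤ n := le_trans (Nat.lt_succ_iff.mp (nxt_lt x (Nat.succ_pos i))) (by omega)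
    rw [hA, hB]
    simp only
    rw [retr_of_le hin, retr_of_le h2]
  have h2 : ∀ i ∈ Finset.range m, i ∉ Finset.range n → A i = 0 := by
    intro i _ hi
    have hgt : n < i + 1 := by
      have := Finset.mem_range.not.mp hi
      omega
    rw [hA]
    simp only
    rw [retr_of_gt hgt, sub_self, smul_zero]
  have h3 : ∑ i ∈ Finset.range m, A i = ∑ i ∈ Finset.range n, B i := by
    rw [← Finset.sum_subset (Finset.range_subset_range.mpr hnm) h2]
    exact Finset.sum_congr rfl h1
  rw [freespace_norm_coe, freespace_norm_coe, eseq_sum_coe, eseq_sum_coe]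
  calc ‖∑ i ∈ Finset.range n, B i‖ = ‖∑ i ∈ Finset.range m, A i‖ := by rw [h3]
    _ ≤ ‖∑ i ∈ Finset.range m, B i‖ := hkey

lemma eseq_ne_zero (x : ℕ → M) (K : ℕ) (hinj : Set.InjOn x (Set.Iic K))
    {n : ℕ} (hn : n + 1 ≤ K) : eseq M base x n ≠ 0 := by
  intro h0
  have hlt : nxt x (n + 1) < n + 1 := nxt_lt x (Nat.succ_pos n)
  have hne : x (n + 1) ≠ x (nxt x (n + 1)) := by
    intro he
    have := hinj (Set.mem_Iic.mpr hn) (Set.mem_Iic.mpr (le_trans (le_of_lt hlt) hn)) he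
    omega
  apply freeDelta_ne (x (n + 1)) (x (nxt x (n + 1))) hne
  have hcoe : ((eseq M base x n : FreeSpace M base) :
      NormedSpace.Dual ℝ (LipZero M base)) = 0 := by rw [h0]; rfl
  rw [eseq_coe] at hcoe
  exact sub_eq_zero.mp hcoe

lemma freeDeltaF_base : freeDeltaF M base base = 0 := by
  apply Subtype.ext
  exact freeDelta_base

lemma eseq_add (x : ℕ → M) (k : ℕ) :
    freeDeltaF M base (x (k + 1)) = eseq M base x k + freeDeltaF M base (x (nxt x (k + 1))) := by
  rw [eseq]
  abel

lemma deltaF_mem_span_inf (x : ℕ → M) (hx0 : x 0 = base) :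
    ∀ k, freeDeltaF M base (x k) ∈ Submodule.span ℝ (Set.range (eseq M base x)) := by
  intro k
  induction k using Nat.strong_induction_on with
  | _ k ih =>
    match k with
    | 0 =>
      rw [hx0, freeDeltaF_base]
      exact Submodule.zero_mem _
    | k + 1 =>
      rw [eseq_add]
      exact Submodule.add_mem _ (Submodule.subset_span ⟨k, rfl⟩)
        (ih (nxt x (k + 1)) (nxt_lt x (Nat.succ_pos k)))

lemma deltaF_mem_span_fin (x : ℕ → M) (hx0 : x 0 = base) (d : ℕ) :
    ∀ k, k ≤ d → freeDeltaF M base (x k) ∈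
      Submodule.span ℝ (Set.range (fun i : Fin d => eseq M base x i.1)) := by
  intro k
  induction k using Nat.strong_induction_on with
  | _ k ih =>
    match k with
    | 0 =>
      intro _
      rw [hx0, freeDeltaF_base]
      exact Submodule.zero_mem _
    | k + 1 =>
      intro hk
      rw [eseq_add]
      refine Submodule.add_mem _ (Submodule.subset_span ⟨⟨k, by omega⟩, rfl⟩) ?_
      exact ih (nxt x (k + 1)) (nxt_lt x (Nat.succ_pos k))
        (le_trans (Nat.lt_succ_iff.mp (nxt_lt x (Nat.succ_pos k))) (by omega))

lemma eseq_dense (x : ℕ → M) (hx0 : x 0 = base) (hdr : DenseRange x) :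
    Dense ((Submodule.span ℝ (Set.range (eseq M base x)) :
      Submodule ℝ (FreeSpace M base)) : Set (FreeSpace M base)) := by
  intro v
  rw [closure_subtype]
  set W := Submodule.map (FreeSpace M base).subtype
    (Submodule.span ℝ (Set.range (eseq M base x))) with hW
  have himg : Subtype.val '' ((Submodule.span ℝ (Set.range (eseq M base x)) :
      Submodule ℝ (FreeSpace M base)) : Set (FreeSpace M base)) = (W : Set _) := rfl
  rw [himg]
  have hdelta : ∀ k, freeDelta M base (x k) ∈ W := fun k =>
    ⟨freeDeltaF M base (x k), deltaF_mem_span_inf x hx0 k, rfl⟩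
  have hy : ∀ y : M, freeDelta M base y ∈ closure (W : Set (NormedSpace.Dual ℝ (LipZero M base))) := by
    intro y
    rw [Metric.mem_closure_iff]
    intro ε hε
    obtain ⟨k, hk⟩ := Metric.denseRange_iff.mp hdr y ε hε
    refine ⟨freeDelta M base (x k), hdelta k, ?_⟩
    calc dist (freeDelta M base y) (freeDelta M base (x k)) ≤ dist y (x k) := by
          rw [dist_eq_norm]
          exact norm_freeDelta_sub_le y (x k)
      _ < ε := hk
  have hle : Submodule.span ℝ (Set.range (freeDelta M base)) ≤ W.topologicalClosure := by
    rw [Submodule.span_le]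
    rintro _ ⟨y, rfl⟩
    exact hy y
  have hle2 : FreeSpace M base ≤ W.topologicalClosure :=
    Submodule.topologicalClosure_minimal _ hle W.isClosed_topologicalClosure
  exact hle2 v.2

lemma exists_dense_injective_seq (M : Type*) [MetricSpace M]
    [TopologicalSpace.SeparableSpace M] [Infinite M] (base : M) :
    ∃ x : ℕ → M, x 0 = base ∧ Function.Injective x ∧ DenseRange x := by
  classical
  obtain ⟨D, hDc, hDd⟩ := TopologicalSpace.exists_countable_dense M
  have hDinf : D.Infinite := by
    intro hDfin
    have h1 : closure D = D := hDfin.isClosed.closure_eq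
    have h2 : (Set.univ : Set M) = D := by rw [← hDd.closure_eq, h1]
    exact Set.infinite_univ (h2 ▸ hDfin)
  have hEc : (D \ {base}).Countable := hDc.mono Set.diff_subset
  have hEinf : (D \ {base}).Infinite := hDinf.diff (Set.finite_singleton base)
  haveI := hEc.to_subtype
  haveI := hEinf.to_subtype
  obtain ⟨denum⟩ := nonempty_denumerable ↥(D \ {base})
  haveI := denum
  let q : ↥(D \ {base}) ≃ ℕ := Denumerable.eqv ↥(D \ {base})
  refine ⟨fun k => match k with
    | 0 => base
    | Nat.succ k' => ((q.symm k' : ↥(D \ {base})) : M), rfl, ?_, ?_⟩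
  · intro a b hab
    match a, b with
    | 0, 0 => rfl
    | 0, Nat.succ b' =>
      exact absurd (show ((q.symm b' : ↥(D \ {base})) : M) = base from hab.symm)
        (q.symm b').2.2
    | Nat.succ a', 0 =>
      exact absurd (show ((q.symm a' : ↥(D \ {base})) : M) = base from hab)
        (q.symm a').2.2
    | Nat.succ a', Nat.succ b' =>
      have h1 : q.symm a' = q.symm b' := Subtype.ext hab
      have h2 := q.symm.injective h1
      omega
  · have hsub : D ⊆ Set.range (fun k => match k with
        | 0 => base
        | Nat.succ k' => ((q.symm k' : ↥(D \ {base})) : M)) := by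
      intro dd hdd
      by_cases hb : dd = base
      · exact ⟨0, hb.symm⟩
      · have hddE : dd ∈ D \ {base} := ⟨hdd, hb⟩
        refine ⟨Nat.succ (q ⟨dd, hddE⟩), ?_⟩
        show ((q.symm (q ⟨dd, hddE⟩) : ↥(D \ {base})) : M) = dd
        rw [Equiv.symm_apply_apply]
    exact hDd.mono hsub

end Assembly


/-- **(Theorem 1 / Theorem `t:schauderUltrametric`).** The Lipschitz-free space over a
separable ultrametric space (with distinguished point `base`) has a monotone Schauder
basis. -/
theorem freeSpace_ultrametric_hasMonotoneSchauderBasis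
    (M : Type*) [MetricSpace M] [TopologicalSpace.SeparableSpace M]
    (hU : ∀ x y z : M, dist x z ≤ max (dist x y) (dist y z)) (base : M) :
    HasMonotoneSchauderBasis (FreeSpace M base) := by
  classical
  rcases finite_or_infinite M with hfin | hinf
  · -- finite case
    left
    haveI := Fintype.ofFinite M
    letI : SeminormedAddCommGroup (LipZero M base) := NormedAddCommGroup.toSeminormedAddCommGroup
    set n := Fintype.card M with hncard
    have hn : 0 < n := Fintype.card_pos_iff.mpr ⟨base⟩
    set d := n - 1 with hd
    have hdn : d < n := by omega
    set τ := (Fintype.equivFin M).symm with hτ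
    set i0 := (Fintype.equivFin M) base with hi0
    set σ := (Equiv.swap (⟨0, hn⟩ : Fin n) i0).trans τ with hσ
    have hσ0 : σ ⟨0, hn⟩ = base := by
      rw [hσ]
      simp [Equiv.swap_apply_left, hτ, hi0]
    set x : ℕ → M := fun k => σ ⟨min k d, lt_of_le_of_lt (min_le_right k d) hdn⟩ with hx
    have hxval : ∀ i : Fin n, x i.1 = σ i := by
      intro i
      simp only [hx]
      congr 1
      apply Fin.ext
      simp only
      have := i.2
      omega
    have hx0 : x 0 = base := by
      have h1 := hxval ⟨0, hn⟩
      simp only at h1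
      rw [h1, hσ0]
    have hinj : Set.InjOn x (Set.Iic d) := by
      intro a ha b hb hab
      have ha' : a ≤ d := ha
      have hb' : b ≤ d := hb
      have h1 : σ ⟨a, by omega⟩ = σ ⟨b, by omega⟩ := by
        rw [← hxval ⟨a, by omega⟩, ← hxval ⟨b, by omega⟩]
        exact hab
      have h2 : a = b := congrArg Fin.val (σ.injective h1)
      exact h2
    have hsurj : ∀ y : M, ∃ k, k ≤ d ∧ x k = y := by
      intro y
      refine ⟨(σ.symm y).1, ?_, ?_⟩
      · have := (σ.symm y).2
        omega
      · rw [hxval (σ.symm y)]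
        exact σ.apply_symm_apply y
    set e' : Fin d → FreeSpace M base := fun i => eseq M base x i.1 with he'
    have hmonoF : ∀ (c : ℕ → ℝ) (a b : ℕ), a ≤ b → b ≤ d →
        ‖∑ i ∈ Finset.range a, c i • eseq M base x i‖ ≤
          ‖∑ i ∈ Finset.range b, c i • eseq M base x i‖ := fun c a b hab hbd =>
      eseq_mono hU x hx0 d hinj c a b hab hbd
    have heF : ∀ i, i < d → eseq M base x i ≠ 0 := fun i hi =>
      eseq_ne_zero x d hinj (by omega)
    -- spanning
    set Sp := Submodule.span ℝ (Set.range e') with hSp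
    haveI hSpFD : FiniteDimensional ℝ Sp :=
      FiniteDimensional.span_of_finite ℝ (Set.finite_range e')
    set U := Submodule.map (FreeSpace M base).subtype Sp with hUdef
    haveI hUFD : FiniteDimensional ℝ U := Module.Finite.map Sp _
    have hUclosed := U.closed_of_finiteDimensional
    have hspanle : Submodule.span ℝ (Set.range (freeDelta M base)) ≤ U := by
      rw [Submodule.span_le]
      rintro _ ⟨yy, rfl⟩
      obtain ⟨k, hk, hxk⟩ := hsurj yy
      exact ⟨freeDeltaF M base yy,
        by rw [← hxk]; exact deltaF_mem_span_fin x hx0 d k hk, rfl⟩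
    have hFSle : FreeSpace M base ≤ U := by
      show (Submodule.span ℝ (Set.range (freeDelta M base))).topologicalClosure ≤ U
      exact Submodule.topologicalClosure_minimal _ hspanle hUclosed
    have hmemSp : ∀ v : FreeSpace M base, v ∈ Sp := by
      intro v
      obtain ⟨w, hw, hwv⟩ := Submodule.mem_map.mp (hFSle v.2)
      have hwv' : w = v := Subtype.ext hwv
      rwa [← hwv']
    set extc : (Fin d → ℝ) → (ℕ → ℝ) := fun c k => if h : k < d then c ⟨k, h⟩ else 0 with hextc
    have hext_val : ∀ (c : Fin d → ℝ) (i : Fin d), extc c i.1 = c i := by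
      intro c i
      simp only [hextc]
      rw [dif_pos i.2]
    have hconv : ∀ c : Fin d → ℝ,
        ∑ i, c i • e' i = ∑ k ∈ Finset.range d, extc c k • eseq M base x k := by
      intro c
      rw [← Fin.sum_univ_eq_sum_range (fun k => extc c k • eseq M base x k) d]
      refine Finset.sum_congr rfl fun i _ => ?_
      rw [hext_val]
    have hzero : ∀ a : Fin d → ℝ, ∑ i, a i • e' i = 0 → ∀ i, a i = 0 := by
      intro a ha i
      rw [hconv] at ha
      have h0 := coeff_eq_zero_of_sum_eq_zero heF
        (fun a' ha' => by have := hmonoF (extc a) a' d ha' le_rfl; exact this) ha i.1 i.2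
      rwa [hext_val] at h0
    refine ⟨d, e', fun v => ?_, fun v c hvc N => ?_⟩
    · obtain ⟨c, hc⟩ := (Submodule.mem_span_range_iff_exists_fun ℝ).mp (hmemSp v)
      refine ⟨c, hc.symm, ?_⟩
      intro c' hc'
      funext i
      have hsum0 : ∑ j, (c' j - c j) • e' j = 0 := by
        have hterm : ∀ j : Fin d, (c' j - c j) • e' j = c' j • e' j - c j • e' j :=
          fun j => sub_smul (c' j) (c j) (e' j)
        rw [Finset.sum_congr rfl fun j _ => hterm j, Finset.sum_sub_distrib, ← hc', hc, sub_self]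
      have := hzero _ hsum0 i
      linarith [this]
    · have h3 : (Finset.range d).filter (fun k => k < N) = Finset.range (min N d) := by
        ext j
        simp [Nat.lt_min, and_comm]
      have h1 : ∑ i ∈ Finset.univ.filter (fun i : Fin d => (i : ℕ) < N), c i • e' i
          = ∑ k ∈ Finset.range (min N d), extc c k • eseq M base x k := by
        calc ∑ i ∈ Finset.univ.filter (fun i : Fin d => (i : ℕ) < N), c i • e' i
            = ∑ i : Fin d, (if (i : ℕ) < N then c i • e' i else 0) :=
              Finset.sum_filter _ _
          _ = ∑ i : Fin d,
              (fun k => if k < N then extc c k • eseq M base x k else 0) (i : ℕ) := by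
              refine Finset.sum_congr rfl fun i _ => ?_
              by_cases hiN : (i : ℕ) < N <;> simp [hiN, hext_val, he']
          _ = ∑ k ∈ Finset.range d, (if k < N then extc c k • eseq M base x k else 0) :=
              Fin.sum_univ_eq_sum_range
                (fun k => if k < N then extc c k • eseq M base x k else 0) d
          _ = ∑ k ∈ (Finset.range d).filter (fun k => k < N),
                extc c k • eseq M base x k := (Finset.sum_filter _ _).symm
          _ = ∑ k ∈ Finset.range (min N d), extc c k • eseq M base x k := by rw [h3]
      have h4 : v = ∑ k ∈ Finset.range d, extc c k • eseq M base x k := hvc.trans (hconv c)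
      rw [h1, h4]
      exact hmonoF (extc c) (min N d) d (min_le_right N d) le_rfl
  · -- infinite case
    right
    obtain ⟨x, hx0, hxinj, hxdense⟩ := exists_dense_injective_seq M base
    have hinjOn : ∀ K, Set.InjOn x (Set.Iic K) := fun K => hxinj.injOn
    refine ⟨eseq M base x, ?_⟩
    have he : ∀ m, eseq M base x m ≠ 0 := fun m =>
      eseq_ne_zero x (m + 1) (hinjOn (m + 1)) le_rfl
    have hmono : ∀ (c : ℕ → ℝ) (a b : ℕ), a ≤ b →
        ‖∑ i ∈ Finset.range a, c i • eseq M base x i‖ ≤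
          ‖∑ i ∈ Finset.range b, c i • eseq M base x i‖ := fun c a b hab =>
      eseq_mono hU x hx0 b (hinjOn b) c a b hab le_rfl
    have hdense := eseq_dense x hx0 hxdense
    exact gruenblum (eseq M base x) he hdense hmono

end
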